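/- Under Assumption H and with μ₀ as in the context, there exist ε₂ ∈ (0,ε₁] and C > 0 such that for all |ε| < ε₂: |β(μ₀(ε),ε) − β₁ε² − (β₃ − β₂·T₂/T₁)ε⁴| ≤ C|ε|⁵; that is, β(μ₀(ε),ε) = β₁ε² + (β₃ − β₂T₂/T₁)ε⁴ + O(ε⁵). -/

import Mathlib

open Matrix Set

noncomputable def Jmat : Matrix (Fin 2) (Fin 2) ℂ := !![-Complex.I, 0; 0, Complex.I]

noncomputable def Bmat (a b c : ℝ) : Matrix (Fin 2) (Fin 2) ℂ :=
  !![(a : ℂ), Complex.I * (b : ℂ); -Complex.I * (b : ℂ), (c : ℂ)]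

/-- The 2×2 Hamiltonian and reversible matrix `L = J ⬝ B`. -/
noncomputable def Lmat (a b c : ℝ) : Matrix (Fin 2) (Fin 2) ℂ := Jmat * Bmat a b c

/-- `l` is an eigenvalue of `M`, i.e. a root of its characteristic polynomial. -/
def IsEig (M : Matrix (Fin 2) (Fin 2) ℂ) (l : ℂ) : Prop := (Matrix.charpoly M).IsRoot l

/-- Assumption H: expansions of the real analytic entries `α, β, γ` of the matrix `B(μ,ε)`
around `(μ̄, 0)`, with `T₁ = α₁ + γ₁ > 0`. -/
structure AssumptionH (μb ωs δ₀ ε₀ : ℝ) (α β γ : ℝ → ℝ → ℝ)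
    (α₁ α₂ β₁ β₂ β₃ γ₁ γ₂ : ℝ) : Prop where
  hδ₀ : 0 < δ₀
  hε₀ : 0 < ε₀
  hα_an : AnalyticOnNhd ℝ (fun p : ℝ × ℝ => α p.1 p.2)
    (Ioo (μb - δ₀) (μb + δ₀) ×ˢ Ioo (-ε₀) ε₀)
  hβ_an : AnalyticOnNhd ℝ (fun p : ℝ × ℝ => β p.1 p.2)
    (Ioo (μb - δ₀) (μb + δ₀) ×ˢ Ioo (-ε₀) ε₀)
  hγ_an : AnalyticOnNhd ℝ (fun p : ℝ × ℝ => γ p.1 p.2)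
    (Ioo (μb - δ₀) (μb + δ₀) ×ˢ Ioo (-ε₀) ε₀)
  hT₁ : 0 < α₁ + γ₁
  hexp : ∃ α₀ γ₀ : ℝ → ℝ, ∃ d ∈ Ioc (0 : ℝ) δ₀, ∃ e ∈ Ioc (0 : ℝ) ε₀, ∃ C : ℝ, 0 < C ∧
    AnalyticOnNhd ℝ α₀ (Ioo (-d) d) ∧ AnalyticOnNhd ℝ γ₀ (Ioo (-d) d) ∧
    ∀ δ ε : ℝ, |δ| < d → |ε| < e →
      |α (μb + δ) ε - (-(α₀ δ) + α₂ * ε ^ 2)| ≤ C * (|ε| ^ 3 + |δ| * ε ^ 2 + δ ^ 2 * |ε|) ∧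
      |β (μb + δ) ε - (β₁ * ε ^ 2 + β₂ * δ * ε ^ 2 + β₃ * ε ^ 4)| ≤
        C * (|ε| ^ 5 + |δ| * |ε| ^ 3 + δ ^ 2 * ε ^ 2 + |δ| ^ 3 * |ε|) ∧
      |γ (μb + δ) ε - (γ₀ δ + γ₂ * ε ^ 2)| ≤ C * (|ε| ^ 3 + |δ| * ε ^ 2 + δ ^ 2 * |ε|) ∧
      |α₀ δ - (ωs - α₁ * δ)| ≤ C * δ ^ 2 ∧
      |γ₀ δ - (ωs + γ₁ * δ)| ≤ C * δ ^ 2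

/-- The graphs of the real analytic functions `μ₀, μ₊, μ₋` are exactly the zero sets of
`T = α + γ`, `d₊ = T + 2β`, `d₋ = T - 2β` in `(μ̄-δ₀,μ̄+δ₀) × (-ε₁,ε₁)`, with the sign
of these functions positive above the respective graph and negative below it. -/
structure ZeroCurves (μb δ₀ : ℝ) (α β γ : ℝ → ℝ → ℝ) (ε₁ : ℝ)
    (μ₀ μp μm : ℝ → ℝ) : Prop where
  hμ₀_an : AnalyticOnNhd ℝ μ₀ (Ioo (-ε₁) ε₁)
  hμp_an : AnalyticOnNhd ℝ μp (Ioo (-ε₁) ε₁)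
  hμm_an : AnalyticOnNhd ℝ μm (Ioo (-ε₁) ε₁)
  hmaps₀ : ∀ ε ∈ Ioo (-ε₁) ε₁, μ₀ ε ∈ Ioo (μb - δ₀) (μb + δ₀)
  hmapsp : ∀ ε ∈ Ioo (-ε₁) ε₁, μp ε ∈ Ioo (μb - δ₀) (μb + δ₀)
  hmapsm : ∀ ε ∈ Ioo (-ε₁) ε₁, μm ε ∈ Ioo (μb - δ₀) (μb + δ₀)
  hT : ∀ μ ∈ Ioo (μb - δ₀) (μb + δ₀), ∀ ε ∈ Ioo (-ε₁) ε₁,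
    (α μ ε + γ μ ε = 0 ↔ μ = μ₀ ε) ∧
    (μ₀ ε < μ → 0 < α μ ε + γ μ ε) ∧ (μ < μ₀ ε → α μ ε + γ μ ε < 0)
  hdp : ∀ μ ∈ Ioo (μb - δ₀) (μb + δ₀), ∀ ε ∈ Ioo (-ε₁) ε₁,
    (α μ ε + γ μ ε + 2 * β μ ε = 0 ↔ μ = μp ε) ∧
    (μp ε < μ → 0 < α μ ε + γ μ ε + 2 * β μ ε) ∧ (μ < μp ε → α μ ε + γ μ ε + 2 * β μ ε < 0)
  hdm : ∀ μ ∈ Ioo (μb - δ₀) (μb + δ₀), ∀ ε ∈ Ioo (-ε₁) ε₁,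
    (α μ ε + γ μ ε - 2 * β μ ε = 0 ↔ μ = μm ε) ∧
    (μm ε < μ → 0 < α μ ε + γ μ ε - 2 * β μ ε) ∧ (μ < μm ε → α μ ε + γ μ ε - 2 * β μ ε < 0)

set_option maxHeartbeats 1000000 in
theorem stmt6 (μb ωs δ₀ ε₀ : ℝ) (α β γ : ℝ → ℝ → ℝ) (α₁ α₂ β₁ β₂ β₃ γ₁ γ₂ : ℝ)
    (hH : AssumptionH μb ωs δ₀ ε₀ α β γ α₁ α₂ β₁ β₂ β₃ γ₁ γ₂)
    (ε₁ : ℝ) (hε₁ : ε₁ ∈ Ioc (0 : ℝ) ε₀) (μ₀ μp μm : ℝ → ℝ)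
    (hZ : ZeroCurves μb δ₀ α β γ ε₁ μ₀ μp μm) :
    ∃ ε₂ ∈ Ioc (0 : ℝ) ε₁, ∃ C > (0 : ℝ), ∀ ε : ℝ, |ε| < ε₂ →
      |β (μ₀ ε) ε - (β₁ * ε ^ 2 + (β₃ - β₂ * (α₂ + γ₂) / (α₁ + γ₁)) * ε ^ 4)| ≤
        C * |ε| ^ 5 := by

  obtain ⟨α₀, γ₀, d, hd, e, he, C, hC, -, -, hbound⟩ := hH.hexp
  have hT₁ := hH.hT₁
  have hε₁0 := hε₁.1
  -- Step A: μ₀ 0 = μb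
  have h00 := hbound 0 0 (by simpa using hd.1) (by simpa using he.1)
  have e1 : α μb 0 = -(α₀ 0) := by
    have h := abs_nonpos_iff.mp (h00.1.trans_eq (by norm_num))
    norm_num at h; linarith
  have e2 : γ μb 0 = γ₀ 0 := by
    have h := abs_nonpos_iff.mp (h00.2.2.1.trans_eq (by norm_num))
    norm_num at h; linarith
  have e3 : α₀ 0 = ωs := by
    have h := abs_nonpos_iff.mp (h00.2.2.2.1.trans_eq (by norm_num))
    norm_num at h; linarith
  have e4 : γ₀ 0 = ωs := by
    have h := abs_nonpos_iff.mp (h00.2.2.2.2.trans_eq (by norm_num))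
    norm_num at h; linarith
  have h0mem : (0:ℝ) ∈ Ioo (-ε₁) ε₁ := ⟨by linarith, hε₁0⟩
  have hμbmem : μb ∈ Ioo (μb - δ₀) (μb + δ₀) := ⟨by linarith [hH.hδ₀], by linarith [hH.hδ₀]⟩
  have hμ00 : μ₀ 0 = μb := by
    have hT0 : α μb 0 + γ μb 0 = 0 := by rw [e1, e2, e3, e4]; ring
    exact (((hZ.hT μb hμbmem 0 h0mem).1.mp hT0)).symm
  -- continuity of μ₀ at 0
  have hcont : ContinuousAt μ₀ 0 := (hZ.hμ₀_an 0 h0mem).continuousAt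
  have hηpos : 0 < min d (min 1 ((α₁ + γ₁) / (16 * C))) :=
    lt_min hd.1 (lt_min one_pos (by positivity))
  obtain ⟨ρ, hρpos, hρ⟩ := Metric.continuousAt_iff.mp hcont _ hηpos
  -- constants
  set K := (2 * |α₂ + γ₂| + 4 * C) / (α₁ + γ₁) with hKdef
  have hK0 : 0 ≤ K := by
    rw [hKdef]; exact div_nonneg (by positivity) hT₁.le
  set C₃ := 2 * C * (1 + K + 2 * K ^ 2) with hC₃def
  have hC₃0 : 0 < C₃ := by
    rw [hC₃def]
    nlinarith [hC, hK0, pow_nonneg hK0 2, mul_nonneg hC.le hK0,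
      mul_nonneg hC.le (pow_nonneg hK0 2)]
  set Q := C₃ / (α₁ + γ₁) with hQdef
  have hQ0 : 0 ≤ Q := by rw [hQdef]; exact div_nonneg hC₃0.le hT₁.le
  have hCf : 0 < C * (1 + K + K ^ 2 + K ^ 3) + |β₂| * Q + 1 := by
    have h1 : 0 ≤ C * (1 + K + K ^ 2 + K ^ 3) :=
      mul_nonneg hC.le (by nlinarith [hK0, pow_nonneg hK0 2, pow_nonneg hK0 3])
    have h2 : 0 ≤ |β₂| * Q := mul_nonneg (abs_nonneg β₂) hQ0
    linarith
  refine ⟨min ε₁ (min e (min 1 (min ((α₁ + γ₁) / (16 * C)) ρ))),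
    Set.mem_Ioc.mpr ⟨lt_min hε₁0 (lt_min he.1 (lt_min one_pos (lt_min (by positivity) hρpos))),
      min_le_left _ _⟩,
    C * (1 + K + K ^ 2 + K ^ 3) + |β₂| * Q + 1, hCf, ?_⟩
  intro ε hε
  have hAε₁ : |ε| < ε₁ := lt_of_lt_of_le hε (min_le_left _ _)
  have hAe : |ε| < e := lt_of_lt_of_le hε ((min_le_right _ _).trans (min_le_left _ _))
  have hA1 : |ε| ≤ 1 := le_of_lt (lt_of_lt_of_le hε
    ((min_le_right _ _).trans ((min_le_right _ _).trans (min_le_left _ _))))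
  have hAθ : 16 * C * |ε| ≤ α₁ + γ₁ := by
    have h := lt_of_lt_of_le hε ((min_le_right _ _).trans ((min_le_right _ _).trans
      ((min_le_right _ _).trans (min_le_left _ _))))
    rw [lt_div_iff₀ (by positivity : (0:ℝ) < 16 * C)] at h
    nlinarith [h]
  have hAρ : |ε| < ρ := lt_of_lt_of_le hε ((min_le_right _ _).trans ((min_le_right _ _).trans
    ((min_le_right _ _).trans (min_le_right _ _))))
  have hεmem : ε ∈ Ioo (-ε₁) ε₁ := Set.mem_Ioo.mpr (abs_lt.mp hAε₁)
  have hdist := hρ (show dist ε 0 < ρ by rw [Real.dist_eq, sub_zero]; exact hAρ)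
  rw [Real.dist_eq, hμ00] at hdist
  set δ := μ₀ ε - μb with hδdef
  have hDd : |δ| < d := hdist.trans_le (min_le_left _ _)
  have hD1 : |δ| ≤ 1 :=
    le_of_lt (hdist.trans_le ((min_le_right _ _).trans (min_le_left _ _)))
  have hDθ : 16 * C * |δ| ≤ α₁ + γ₁ := by
    have h := hdist.trans_le ((min_le_right _ _).trans (min_le_right _ _))
    rw [lt_div_iff₀ (by positivity : (0:ℝ) < 16 * C)] at h
    nlinarith [h]
  have hb := hbound δ ε hDd hAe
  have hμδ : μb + δ = μ₀ ε := by rw [hδdef]; ring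
  rw [hμδ] at hb
  obtain ⟨hα, hβ, hγ, hsα, hsγ⟩ := hb
  have hTz : α (μ₀ ε) ε + γ (μ₀ ε) ε = 0 :=
    (hZ.hT (μ₀ ε) (hZ.hmaps₀ ε hεmem) ε hεmem).1.mpr rfl
  have hA0 : (0:ℝ) ≤ |ε| := abs_nonneg ε
  have hD0 : (0:ℝ) ≤ |δ| := abs_nonneg δ
  have h4 : ε ^ 4 = |ε| ^ 4 := by
    rw [pow_abs, abs_of_nonneg (show (0:ℝ) ≤ ε ^ 4 by positivity)]
  rw [← sq_abs ε] at hα hγ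
  rw [← sq_abs δ] at hα hγ hsα hsγ
  rw [h4, ← sq_abs ε, ← sq_abs δ] at hβ
  -- the key identity for T on the curve μ₀
  have hid : (α₁ + γ₁) * δ + (α₂ + γ₂) * |ε| ^ 2 =
      -(α (μ₀ ε) ε - (-(α₀ δ) + α₂ * |ε| ^ 2)) - (γ (μ₀ ε) ε - (γ₀ δ + γ₂ * |ε| ^ 2))
      + (α₀ δ - (ωs - α₁ * δ)) - (γ₀ δ - (ωs + γ₁ * δ)) := by
    linear_combination hTz
  have key : |(α₁ + γ₁) * δ + (α₂ + γ₂) * |ε| ^ 2| ≤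
      2 * C * (|ε| ^ 3 + |δ| * |ε| ^ 2 + |δ| ^ 2 * |ε|) + 2 * C * |δ| ^ 2 := by
    have h1 := abs_le.mp hα
    have h2 := abs_le.mp hγ
    have h3 := abs_le.mp hsα
    have h5 := abs_le.mp hsγ
    rw [abs_le]
    constructor <;> linarith [hid, h1.1, h1.2, h2.1, h2.2, h3.1, h3.2, h5.1, h5.2]
  have htri : (α₁ + γ₁) * |δ| ≤
      |(α₁ + γ₁) * δ + (α₂ + γ₂) * |ε| ^ 2| + |α₂ + γ₂| * |ε| ^ 2 := by
    have h := abs_add_le ((α₁ + γ₁) * δ + (α₂ + γ₂) * |ε| ^ 2) (-((α₂ + γ₂) * |ε| ^ 2))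
    rw [show (α₁ + γ₁) * δ + (α₂ + γ₂) * |ε| ^ 2 + -((α₂ + γ₂) * |ε| ^ 2)
        = (α₁ + γ₁) * δ by ring] at h
    have h2 : |-((α₂ + γ₂) * |ε| ^ 2)| = |α₂ + γ₂| * |ε| ^ 2 := by
      rw [abs_neg, abs_mul, abs_of_nonneg (pow_nonneg hA0 2)]
    have h3 : |(α₁ + γ₁) * δ| = (α₁ + γ₁) * |δ| := by
      rw [abs_mul, abs_of_pos hT₁]
    rw [h2, h3] at h
    exact h
  -- bootstrap bound : |δ| ≤ K ε²
  have q3 : |ε| ^ 2 ≤ |ε| := by nlinarith [hA0, hA1]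
  have q8 : |ε| ^ 3 ≤ |ε| ^ 2 := pow_le_pow_of_le_one hA0 hA1 (by norm_num)
  have q6 : |δ| ^ 2 * |ε| ≤ |δ| ^ 2 := mul_le_of_le_one_right (pow_nonneg hD0 2) hA1
  have hDK : |δ| ≤ K * |ε| ^ 2 := by
    rw [hKdef, div_mul_eq_mul_div, le_div_iff₀ hT₁]
    linarith [key, htri,
      mul_le_mul_of_nonneg_right hAθ hD0,
      mul_le_mul_of_nonneg_right hDθ hD0,
      mul_le_mul_of_nonneg_left (mul_le_mul_of_nonneg_left q3 hD0) hC.le,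
      mul_le_mul_of_nonneg_left q6 hC.le,
      mul_le_mul_of_nonneg_left q8 hC.le,
      mul_nonneg (abs_nonneg (α₂ + γ₂)) (pow_nonneg hA0 2),
      mul_nonneg hC.le (pow_nonneg hA0 2)]
  have r2 : |δ| ^ 2 ≤ (K * |ε| ^ 2) ^ 2 := pow_le_pow_left₀ hD0 hDK 2
  have r4 : |ε| ^ 4 ≤ |ε| ^ 3 := pow_le_pow_of_le_one hA0 hA1 (by norm_num)
  have key2 : |(α₁ + γ₁) * δ + (α₂ + γ₂) * |ε| ^ 2| ≤ C₃ * |ε| ^ 3 := by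
    rw [hC₃def]
    linarith [key,
      mul_le_mul_of_nonneg_left (mul_le_mul_of_nonneg_right hDK (pow_nonneg hA0 2)) hC.le,
      mul_le_mul_of_nonneg_left r2 hC.le,
      mul_le_mul_of_nonneg_left q6 hC.le,
      mul_le_mul_of_nonneg_left (mul_le_mul_of_nonneg_left r4 hK0) hC.le,
      mul_le_mul_of_nonneg_left
        (mul_le_mul_of_nonneg_left r4 (pow_nonneg hK0 2)) hC.le]
  have hδ3 : |δ + (α₂ + γ₂) / (α₁ + γ₁) * |ε| ^ 2| ≤ Q * |ε| ^ 3 := by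
    rw [hQdef]
    have hfac : (α₁ + γ₁) * δ + (α₂ + γ₂) * |ε| ^ 2
        = (α₁ + γ₁) * (δ + (α₂ + γ₂) / (α₁ + γ₁) * |ε| ^ 2) := by
      field_simp
    have h := key2
    rw [hfac, abs_mul, abs_of_pos hT₁] at h
    have h2 : |δ + (α₂ + γ₂) / (α₁ + γ₁) * |ε| ^ 2| * (α₁ + γ₁) ≤ C₃ * |ε| ^ 3 := by
      linarith [h]
    rw [show C₃ / (α₁ + γ₁) * |ε| ^ 3 = C₃ * |ε| ^ 3 / (α₁ + γ₁) by ring]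
    exact (le_div_iff₀ hT₁).mpr h2
  -- final estimate
  have hidβ : β (μ₀ ε) ε - (β₁ * ε ^ 2 + (β₃ - β₂ * (α₂ + γ₂) / (α₁ + γ₁)) * ε ^ 4)
      = (β (μ₀ ε) ε - (β₁ * |ε| ^ 2 + β₂ * δ * |ε| ^ 2 + β₃ * |ε| ^ 4))
        + β₂ * |ε| ^ 2 * (δ + (α₂ + γ₂) / (α₁ + γ₁) * |ε| ^ 2) := by
    rw [← sq_abs ε, h4]; ring
  have hterm2 : |β₂ * |ε| ^ 2 * (δ + (α₂ + γ₂) / (α₁ + γ₁) * |ε| ^ 2)| ≤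
      |β₂| * |ε| ^ 2 * (Q * |ε| ^ 3) := by
    rw [abs_mul, abs_mul, abs_of_nonneg (pow_nonneg hA0 2)]
    exact mul_le_mul_of_nonneg_left hδ3 (mul_nonneg (abs_nonneg β₂) (pow_nonneg hA0 2))
  have h65 : |ε| ^ 6 ≤ |ε| ^ 5 := pow_le_pow_of_le_one hA0 hA1 (by norm_num)
  calc |β (μ₀ ε) ε - (β₁ * ε ^ 2 + (β₃ - β₂ * (α₂ + γ₂) / (α₁ + γ₁)) * ε ^ 4)|
      = |(β (μ₀ ε) ε - (β₁ * |ε| ^ 2 + β₂ * δ * |ε| ^ 2 + β₃ * |ε| ^ 4))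
        + β₂ * |ε| ^ 2 * (δ + (α₂ + γ₂) / (α₁ + γ₁) * |ε| ^ 2)| := by rw [hidβ]
    _ ≤ |β (μ₀ ε) ε - (β₁ * |ε| ^ 2 + β₂ * δ * |ε| ^ 2 + β₃ * |ε| ^ 4)|
        + |β₂ * |ε| ^ 2 * (δ + (α₂ + γ₂) / (α₁ + γ₁) * |ε| ^ 2)| := abs_add_le _ _
    _ ≤ (C * (1 + K + K ^ 2 + K ^ 3) + |β₂| * Q + 1) * |ε| ^ 5 := by
        linarith [hβ, hterm2, pow_nonneg hA0 5,
          mul_le_mul_of_nonneg_left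
            (mul_le_mul_of_nonneg_right hDK (pow_nonneg hA0 3)) hC.le,
          mul_le_mul_of_nonneg_left
            (mul_le_mul_of_nonneg_right r2 (pow_nonneg hA0 2)) hC.le,
          mul_le_mul_of_nonneg_left
            (mul_le_mul_of_nonneg_left h65 (pow_nonneg hK0 2)) hC.le,
          mul_le_mul_of_nonneg_left
            (mul_le_of_le_one_right (pow_nonneg hD0 3) hA1) hC.le,
          mul_le_mul_of_nonneg_left (pow_le_pow_left₀ hD0 hDK 3) hC.le,
          mul_le_mul_of_nonneg_left
            (mul_le_mul_of_nonneg_left h65 (pow_nonneg hK0 3)) hC.le]
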